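/- Let n ≥ 4 and let 2 ≤ r ≤ n−2. Then Σ_{σ ∈ S_n} fix(σ)^r · ( C(fix(σ),2) + c₂(σ) − fix(σ) ) = n! · Σ_{i=2}^{r} C(i,2) · S(r,i), where C(a,b) denotes the binomial coefficient. Representation-theoretically, this says the multiplicity of the irreducible representation S^{(n−2,2)} of S_n in the r-th tensor power of the n-dimensional permutation representation equals Σ_{i=2}^{r} C(i,2) S(r,i). -/

import Mathlib

/-- Stirling numbers of the second kind. -/
def stirling : ℕ → ℕ → ℕ
  | 0, 0 => 1
  | 0, _ + 1 => 0
  | _ + 1, 0 => 0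
  | n + 1, k + 1 => (k + 1) * stirling n (k + 1) + stirling n k

/-- The number of fixed points of a permutation of `Fin n`. -/
def fixCount {n : ℕ} (σ : Equiv.Perm (Fin n)) : ℕ :=
  (Finset.univ.filter fun x => σ x = x).card

/-- The number of 2-cycles (transpositions) in the cycle decomposition of a permutation. -/
def twoCycleCount {n : ℕ} (σ : Equiv.Perm (Fin n)) : ℕ :=
  Multiset.count 2 σ.cycleType

section StirlingLemmas

lemma stirling_succ_zero (n : ℕ) : stirling (n+1) 0 = 0 := rfl
lemma stirling_succ_succ (n k : ℕ) :
    stirling (n+1) (k+1) = (k + 1) * stirling n (k + 1) + stirling n k := rfl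

lemma stirling_eq_zero {n k : ℕ} (h : n < k) : stirling n k = 0 := by
  induction n generalizing k with
  | zero => cases k with | zero => omega | succ k => rfl
  | succ n ih =>
    cases k with
    | zero => omega
    | succ k => rw [stirling_succ_succ, ih (by omega), ih (by omega)]; ring

lemma mul_descFactorial (x i : ℕ) :
    x * x.descFactorial i = x.descFactorial (i+1) + i * x.descFactorial i := by
  rcases le_or_gt i x with h | h
  · rw [Nat.descFactorial_succ]
    have : x - i + i = x := by omega
    nlinarith [this]
  · rw [Nat.descFactorial_of_lt h, Nat.descFactorial_of_lt (by omega)]; ring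

lemma pow_eq_sum_stirling (x r : ℕ) :
    x ^ r = ∑ i ∈ Finset.range (r+1), stirling r i * x.descFactorial i := by
  induction r with
  | zero => simp [stirling]
  | succ r ih =>
    have : x ^ (r+1) = ∑ i ∈ Finset.range (r+1), stirling r i * (x * x.descFactorial i) := by
      rw [pow_succ, ih, Finset.sum_mul]
      exact Finset.sum_congr rfl fun i _ => by ring
    rw [this]
    simp_rw [mul_descFactorial, Nat.mul_add]
    rw [Finset.sum_add_distrib]
    rw [Finset.sum_range_succ' (fun i => stirling (r+1) i * x.descFactorial i)]
    simp only [stirling_succ_succ, stirling_succ_zero, Nat.zero_mul, Nat.add_zero]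
    have h2 : ∑ i ∈ Finset.range (r+1), stirling r i * (i * x.descFactorial i)
        = ∑ i ∈ Finset.range (r+1), (i+1) * stirling r (i+1) * x.descFactorial (i+1) := by
      have := Finset.sum_range_succ' (fun i => i * stirling r i * x.descFactorial i) (r+1)
      rw [Finset.sum_range_succ] at this
      simp only [stirling_eq_zero (show r < r+1 by omega)] at this
      simp only [Nat.mul_zero, Nat.zero_mul, Nat.add_zero] at this
      rw [show ∑ i ∈ Finset.range (r+1), stirling r i * (i * x.descFactorial i)
          = ∑ i ∈ Finset.range (r+1), i * stirling r i * x.descFactorial i by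
        exact Finset.sum_congr rfl fun i _ => by ring]
      rw [← this]
    rw [h2, ← Finset.sum_add_distrib]
    exact Finset.sum_congr rfl fun i _ => by ring

lemma stir_shift (s : ℕ) (g : ℕ → ℕ) :
    ∑ i ∈ Finset.range (s+1), g (i+1) * stirling s (i+1) + g 0 * stirling s 0
      = ∑ i ∈ Finset.range (s+1), g i * stirling s i := by
  have h1 := Finset.sum_range_succ' (fun i => g i * stirling s i) (s+1)
  rw [Finset.sum_range_succ (fun i => g i * stirling s i) (s+1),
    stirling_eq_zero (Nat.lt_succ_self s)] at h1
  simpa using h1.symm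

lemma stir_step (s : ℕ) (g : ℕ → ℕ) :
    ∑ i ∈ Finset.range (s+2), g i * stirling (s+1) i
      = ∑ i ∈ Finset.range (s+1), g (i+1) * ((i+1) * stirling s (i+1) + stirling s i) := by
  rw [Finset.sum_range_succ' (fun i => g i * stirling (s+1) i) (s+1)]
  simp [stirling_succ_succ, stirling_succ_zero]

lemma bell_rec (s : ℕ) :
    ∑ i ∈ Finset.range (s+2), stirling (s+1) i
      = ∑ i ∈ Finset.range (s+1), i * stirling s i
        + ∑ i ∈ Finset.range (s+1), stirling s i := by
  have h : ∑ i ∈ Finset.range (s+2), stirling (s+1) i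
      = ∑ i ∈ Finset.range (s+2), 1 * stirling (s+1) i := by simp
  rw [h, stir_step s (fun _ => 1)]
  simp only [one_mul]
  rw [Finset.sum_add_distrib]
  congr 1
  have h2 := stir_shift s id
  simpa using h2

lemma m1_rec (s : ℕ) :
    ∑ i ∈ Finset.range (s+2), i * stirling (s+1) i
      = ∑ i ∈ Finset.range (s+1), i * i * stirling s i
        + ∑ i ∈ Finset.range (s+1), i * stirling s i
        + ∑ i ∈ Finset.range (s+1), stirling s i := by
  rw [stir_step s (fun i => i)]
  have expand : ∀ i, (i+1) * ((i+1) * stirling s (i+1) + stirling s i)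
      = (i+1)*(i+1) * stirling s (i+1) + (i+1) * stirling s i := fun i => by ring
  simp_rw [expand]
  rw [Finset.sum_add_distrib]
  have hA : ∑ i ∈ Finset.range (s+1), (i+1)*(i+1) * stirling s (i+1)
      = ∑ i ∈ Finset.range (s+1), i * i * stirling s i := by
    have := stir_shift s (fun i => i * i)
    simpa using this
  have hB : ∑ i ∈ Finset.range (s+1), (i+1) * stirling s i
      = ∑ i ∈ Finset.range (s+1), i * stirling s i
        + ∑ i ∈ Finset.range (s+1), stirling s i := by
    rw [← Finset.sum_add_distrib]
    exact Finset.sum_congr rfl fun i _ => by ring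
  rw [hA, hB]
  omega

lemma sq_choose (i : ℕ) : i * i = 2 * Nat.choose i 2 + i := by
  induction i with
  | zero => simp
  | succ i ih =>
    rw [Nat.choose_succ_succ, Nat.choose_one_right]
    nlinarith [ih]

lemma key_identity (r : ℕ) :
    ∑ i ∈ Finset.range (r+3), stirling (r+2) i + ∑ i ∈ Finset.range (r+1), stirling r i
      = 3 * ∑ i ∈ Finset.range (r+2), stirling (r+1) i
        + 2 * ∑ i ∈ Finset.Icc 2 r, Nat.choose i 2 * stirling r i := by
  have hb1 := bell_rec r
  have hb2 : ∑ i ∈ Finset.range (r+3), stirling (r+2) i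
      = ∑ i ∈ Finset.range (r+2), i * stirling (r+1) i
        + ∑ i ∈ Finset.range (r+2), stirling (r+1) i := bell_rec (r+1)
  have hm := m1_rec r
  have hIcc : ∑ i ∈ Finset.Icc 2 r, Nat.choose i 2 * stirling r i
      = ∑ i ∈ Finset.range (r+1), Nat.choose i 2 * stirling r i := by
    apply Finset.sum_subset
    · intro i hi; simp only [Finset.mem_Icc] at hi; simp only [Finset.mem_range]; omega
    · intro i hi hni
      simp only [Finset.mem_Icc, Finset.mem_range] at hi hni
      have : i < 2 := by omega
      rw [Nat.choose_eq_zero_of_lt this, Nat.zero_mul]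
  have hM2 : ∑ i ∈ Finset.range (r+1), i * i * stirling r i
      = 2 * ∑ i ∈ Finset.range (r+1), Nat.choose i 2 * stirling r i
        + ∑ i ∈ Finset.range (r+1), i * stirling r i := by
    rw [Finset.mul_sum, ← Finset.sum_add_distrib]
    exact Finset.sum_congr rfl fun i _ => by rw [sq_choose i]; ring
  rw [hIcc]
  omega

end StirlingLemmas

section FixcSection

open Finset Equiv Equiv.Perm Nat

variable {α : Type*} [Fintype α] [DecidableEq α]

/-- Number of fixed points, general version. -/
def fixc (σ : Equiv.Perm α) : ℕ := (Finset.univ.filter fun x => σ x = x).card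

instance instDecPairNe (a b : α) : DecidablePred (fun x : α => x ≠ a ∧ x ≠ b) :=
  fun _ => instDecidableAnd

def embEquiv (σ : Perm α) (i : ℕ) :
    (Fin i ↪ {x : α // σ x = x}) ≃ {f : Fin i ↪ α // ∀ j, σ (f j) = f j} where
  toFun g := ⟨g.trans (Function.Embedding.subtype _), fun j => (g j).2⟩
  invFun f := Function.Embedding.codRestrict {x | σ x = x} f.1 f.2
  left_inv g := by ext j : 2; rfl
  right_inv f := by ext j; rfl

lemma descFact_fixc_eq (σ : Perm α) (i : ℕ) :
    (fixc σ).descFactorial i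
      = (Finset.univ.filter fun f : Fin i ↪ α => ∀ j, σ (f j) = f j).card := by
  have h1 : (fixc σ).descFactorial i = Fintype.card (Fin i ↪ {x : α // σ x = x}) := by
    rw [Fintype.card_embedding_eq, Fintype.card_fin, Fintype.card_subtype]; rfl
  rw [h1, Fintype.card_congr (embEquiv σ i), Fintype.card_subtype]

lemma count_perm_fixing {i : ℕ} (f : Fin i ↪ α) :
    (Finset.univ.filter fun σ : Perm α => ∀ j, σ (f j) = f j).card
      = (Fintype.card α - i)! := by
  haveI : DecidablePred (· ∈ Set.range f) :=
    fun x => decidable_of_iff (∃ j, f j = x) (by simp [Set.mem_range])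
  rw [← Fintype.card_subtype]
  have e1 := Equiv.Perm.subtypeEquivSubtypePerm (fun x : α => ¬ (x ∈ Set.range f))
  have e2 : {σ : Perm α // ∀ a, ¬¬(a ∈ Set.range f) → σ a = a}
      ≃ {σ : Perm α // ∀ j, σ (f j) = f j} :=
    Equiv.subtypeEquivRight (by
      intro σ
      constructor
      · intro h j
        exact h (f j) (not_not_intro ⟨j, rfl⟩)
      · intro h a ha
        obtain ⟨j, rfl⟩ := not_not.mp ha
        exact h j)
  rw [← Fintype.card_congr (e1.trans e2), Fintype.card_perm]
  congr 1
  rw [Fintype.card_subtype_compl]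
  congr 1
  refine (Fintype.card_of_subtype (Finset.univ.image f) ?_).trans ?_
  · intro x; simp [Set.mem_range, eq_comm]
  · rw [Finset.card_image_of_injective _ f.injective, Finset.card_univ, Fintype.card_fin]

lemma sum_descFact_fixc (i : ℕ) (hi : i ≤ Fintype.card α) :
    ∑ σ : Perm α, (fixc σ).descFactorial i = (Fintype.card α)! := by
  simp_rw [descFact_fixc_eq, Finset.card_filter]
  rw [Finset.sum_comm]
  simp_rw [← Finset.card_filter]
  rw [Finset.sum_congr rfl fun f _ => count_perm_fixing f, Finset.sum_const, smul_eq_mul]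
  rw [Finset.card_univ, Fintype.card_embedding_eq, Fintype.card_fin]
  rw [Nat.mul_comm]
  exact Nat.factorial_mul_descFactorial hi

lemma sum_pow_fixc (s : ℕ) (hs : s ≤ Fintype.card α) :
    ∑ σ : Perm α, (fixc σ) ^ s
      = (Fintype.card α)! * ∑ i ∈ Finset.range (s+1), stirling s i := by
  simp_rw [pow_eq_sum_stirling]
  rw [Finset.sum_comm, Finset.mul_sum]
  refine Finset.sum_congr rfl fun i hi => ?_
  have hi' : i ≤ Fintype.card α := by
    have := Finset.mem_range.mp hi; omega
  rw [← Finset.mul_sum, sum_descFact_fixc i hi', Nat.mul_comm]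
-- orbit of a point with σ² a = a
lemma zpow_apply_mem_pair {σ : Perm α} {a : α} (h2 : σ (σ a) = a) (i : ℤ) :
    (σ ^ i) a = a ∨ (σ ^ i) a = σ a := by
  have hsq : (σ ^ (2:ℤ)) a = a := by
    have h : σ ^ (2:ℤ) = σ * σ := by
      rw [show (2:ℤ) = 1 + 1 by norm_num, zpow_add, zpow_one]
    rw [h, Equiv.Perm.mul_apply, h2]
  have key : (σ ^ i) a = (σ ^ (i % 2)) a := by
    have h : σ ^ i = σ ^ (i % 2) * (σ ^ (2:ℤ)) ^ (i / 2) := by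
      rw [← zpow_mul, ← zpow_add]; congr 1; omega
    rw [h, Equiv.Perm.mul_apply, zpow_apply_eq_self_of_apply_eq_self hsq]
  rcases Int.emod_two_eq_zero_or_one i with h | h <;> rw [key, h]
  · left; simp
  · right; simp

lemma support_cycleOf_of_two {σ : Perm α} {a : α} (h1 : σ a ≠ a) (h2 : σ (σ a) = a) :
    (σ.cycleOf a).support = {a, σ a} := by
  ext y
  rw [mem_support_cycleOf_iff]
  constructor
  · rintro ⟨⟨i, rfl⟩, -⟩
    rcases zpow_apply_mem_pair h2 i with h | h <;> simp [h]
  · intro hy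
    simp only [mem_insert, mem_singleton] at hy
    rcases hy with rfl | rfl
    · exact ⟨SameCycle.refl _ _, mem_support.2 h1⟩
    · exact ⟨⟨1, by simp⟩, mem_support.2 h1⟩

lemma card_D_eq (σ : Perm α) :
    (Finset.univ.filter fun a : α => σ a ≠ a ∧ σ (σ a) = a).card
      = 2 * Multiset.count 2 σ.cycleType := by
  classical
  set D := Finset.univ.filter fun a : α => σ a ≠ a ∧ σ (σ a) = a with hD
  set t := σ.cycleFactorsFinset.filter fun c => c.support.card = 2 with ht
  have hmaps : ∀ a ∈ D, σ.cycleOf a ∈ t := by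
    intro a ha
    simp only [hD, mem_filter, mem_univ, true_and] at ha
    simp only [ht, mem_filter]
    refine ⟨cycleOf_mem_cycleFactorsFinset_iff.2 (mem_support.2 ha.1), ?_⟩
    rw [support_cycleOf_of_two ha.1 ha.2, Finset.card_pair (Ne.symm ha.1)]
  have hcard := Finset.card_eq_sum_card_fiberwise hmaps
  have hfib : ∀ c ∈ t, (D.filter fun a => σ.cycleOf a = c) = c.support := by
    intro c hc
    simp only [ht, mem_filter] at hc
    obtain ⟨hcf, hc2⟩ := hc
    obtain ⟨x, y, hxy, rfl⟩ := card_support_eq_two.1 hc2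
    ext a
    simp only [mem_filter, hD, mem_univ, true_and]
    constructor
    · rintro ⟨⟨h1, h2⟩, hceq⟩
      rw [← hceq, mem_support_cycleOf_iff]
      exact ⟨SameCycle.refl _ _, mem_support.2 h1⟩
    · intro ha
      have hceq := cycle_is_cycleOf ha hcf
      have hca : Equiv.swap x y a = σ a := ((mem_cycleFactorsFinset_iff).1 hcf).2 a ha
      have hσa : σ a ∈ (Equiv.swap x y).support := by rw [← hca]; exact apply_mem_support.2 ha
      have hca2 : Equiv.swap x y (σ a) = σ (σ a) := ((mem_cycleFactorsFinset_iff).1 hcf).2 _ hσa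
      have h1 : σ a ≠ a := by
        rw [← hca]; exact mem_support.1 ha
      refine ⟨⟨h1, ?_⟩, hceq.symm⟩
      rw [← hca2, ← hca, Equiv.swap_apply_self]
  have hsum : ∑ c ∈ t, (D.filter fun a => σ.cycleOf a = c).card = ∑ _c ∈ t, 2 :=
    Finset.sum_congr rfl fun c hc => by rw [hfib c hc]; exact (mem_filter.1 hc).2
  rw [hsum, Finset.sum_const, smul_eq_mul, Nat.mul_comm] at hcard
  rw [hcard]
  congr 1
  rw [cycleType_def, Multiset.count_map, ht]
  rw [Finset.card_def, Finset.filter_val]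
  congr 1
  apply Multiset.filter_congr
  intro c _
  simp [eq_comm]
lemma pair_pres (σ : Perm α) {a b : α} (ha : σ a = b) (hb : σ b = a) (x : α) :
    (x ≠ a ∧ x ≠ b) ↔ (σ x ≠ a ∧ σ x ≠ b) := by
  have h1 : σ x = a ↔ x = b := by rw [← hb, Equiv.apply_eq_iff_eq]
  have h2 : σ x = b ↔ x = a := by rw [← ha, Equiv.apply_eq_iff_eq]
  constructor
  · rintro ⟨hxa, hxb⟩; exact ⟨fun h => hxb (h1.1 h), fun h => hxa (h2.1 h)⟩
  · rintro ⟨ga, gb⟩; exact ⟨fun h => gb (h2.2 h), fun h => ga (h1.2 h)⟩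

def pairEquiv (a b : α) (hab : a ≠ b) :
    {σ : Perm α // σ a = b ∧ σ b = a} ≃ Perm {x : α // x ≠ a ∧ x ≠ b} where
  toFun σp := σp.1.subtypePerm (fun x => (pair_pres σp.1 σp.2.1 σp.2.2 x).symm)
  invFun τ := ⟨Equiv.Perm.ofSubtype τ * Equiv.swap a b, by
    constructor
    · rw [Equiv.Perm.mul_apply, Equiv.swap_apply_left]
      exact Equiv.Perm.ofSubtype_apply_of_not_mem τ (by simp)
    · rw [Equiv.Perm.mul_apply, Equiv.swap_apply_right]
      exact Equiv.Perm.ofSubtype_apply_of_not_mem τ (by simp [hab])⟩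
  left_inv := by
    rintro ⟨σ, ha, hb⟩
    apply Subtype.ext
    ext x
    simp only [Equiv.Perm.mul_apply]
    by_cases hxa : x = a
    · subst hxa
      rw [Equiv.swap_apply_left, Equiv.Perm.ofSubtype_apply_of_not_mem _ (by simp), ha]
    by_cases hxb : x = b
    · subst hxb
      rw [Equiv.swap_apply_right, Equiv.Perm.ofSubtype_apply_of_not_mem _ (by simp [hab]), hb]
    · rw [Equiv.swap_apply_of_ne_of_ne hxa hxb]
      have hmem := Equiv.Perm.ofSubtype_apply_of_mem (p := fun x : α => x ≠ a ∧ x ≠ b)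
        (σ.subtypePerm (fun x => (pair_pres σ ha hb x).symm)) (show x ≠ a ∧ x ≠ b from ⟨hxa, hxb⟩)
      rw [hmem]
      rfl
  right_inv := by
    intro τ
    ext ⟨x, hx⟩
    simp only [Equiv.Perm.subtypePerm_apply, Equiv.Perm.mul_apply]
    rw [Equiv.swap_apply_of_ne_of_ne hx.1 hx.2]
    exact Equiv.Perm.ofSubtype_apply_of_mem (p := fun x : α => x ≠ a ∧ x ≠ b) τ hx

def pairFixEquiv (σ : Perm α) {a b : α} (ha : σ a = b) (hb : σ b = a) (hab : a ≠ b)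
    (h : ∀ x, (x ≠ a ∧ x ≠ b) ↔ (σ x ≠ a ∧ σ x ≠ b)) :
    {x : α // σ x = x} ≃ {y : {x : α // x ≠ a ∧ x ≠ b} // σ.subtypePerm (fun x => (h x).symm) y = y} where
  toFun z := ⟨⟨z.1, by
      refine ⟨fun e => hab ?_, fun e => hab ?_⟩
      · have hz := z.2; rw [e, ha] at hz; exact hz.symm
      · have hz := z.2; rw [e, hb] at hz; exact hz⟩, Subtype.ext z.2⟩
  invFun w := ⟨w.1.1, congrArg Subtype.val w.2⟩
  left_inv z := rfl
  right_inv w := Subtype.ext (Subtype.ext rfl)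

lemma fixc_pairEquiv {a b : α} (hab : a ≠ b) (σp : {σ : Perm α // σ a = b ∧ σ b = a}) :
    fixc σp.1 = fixc (pairEquiv a b hab σp) := by
  have h1 : fixc σp.1 = Fintype.card {x : α // σp.1 x = x} := (Fintype.card_subtype _).symm
  have h2 : fixc (pairEquiv a b hab σp)
      = Fintype.card {y : {x : α // x ≠ a ∧ x ≠ b} // (pairEquiv a b hab σp) y = y} :=
    (Fintype.card_subtype _).symm
  rw [h1, h2]
  exact Fintype.card_congr (pairFixEquiv σp.1 σp.2.1 σp.2.2 hab
    (fun x => pair_pres σp.1 σp.2.1 σp.2.2 x))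

lemma sum_filter_pair (r : ℕ) {a b : α} (hab : a ≠ b) (hr : r + 2 ≤ Fintype.card α) :
    ∑ σ ∈ Finset.univ.filter (fun σ : Perm α => σ a = b ∧ σ b = a), (fixc σ)^r
      = (Fintype.card α - 2)! * ∑ i ∈ Finset.range (r+1), stirling r i := by
  classical
  rw [Finset.sum_subtype (p := fun σ : Perm α => σ a = b ∧ σ b = a) _ (fun σ => by simp)]
  rw [Finset.sum_congr rfl (fun σp _ => by rw [fixc_pairEquiv hab σp])]
  rw [Equiv.sum_comp (pairEquiv a b hab) (fun τ => (fixc τ)^r)]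
  have hcard2 : Fintype.card {x : α // x ≠ a ∧ x ≠ b} = Fintype.card α - 2 := by
    rw [Fintype.card_subtype]
    have hset : Finset.univ.filter (fun x : α => x ≠ a ∧ x ≠ b) = Finset.univ \ {a, b} := by
      ext x; simp [not_or]
    rw [hset, Finset.card_sdiff_of_subset (Finset.subset_univ _), Finset.card_univ, Finset.card_pair hab]
  rw [sum_pow_fixc r (by rw [hcard2]; omega), hcard2]

lemma sum_pow_mul_D (r : ℕ) (hr : r + 2 ≤ Fintype.card α) :
    ∑ σ : Perm α, (fixc σ)^r * ((Finset.univ.filter fun x => σ x ≠ x ∧ σ (σ x) = x).card)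
      = (Fintype.card α)! * ∑ i ∈ Finset.range (r+1), stirling r i := by
  have step1 : ∀ σ : Perm α,
      (fixc σ)^r * (Finset.univ.filter fun x => σ x ≠ x ∧ σ (σ x) = x).card
      = ∑ x : α, if σ x ≠ x ∧ σ (σ x) = x then (fixc σ)^r else 0 := by
    intro σ
    rw [Finset.card_filter, Finset.mul_sum]
    exact Finset.sum_congr rfl fun x _ => by split <;> simp
  simp_rw [step1]
  rw [Finset.sum_comm]
  have step2 : ∀ x : α, ∑ σ : Perm α, (if σ x ≠ x ∧ σ (σ x) = x then (fixc σ)^r else 0)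
      = (Fintype.card α - 1) * ((Fintype.card α - 2)! * ∑ i ∈ Finset.range (r+1), stirling r i) := by
    intro x
    rw [← Finset.sum_filter]
    have hmaps : ∀ σ ∈ Finset.univ.filter (fun σ : Perm α => σ x ≠ x ∧ σ (σ x) = x),
        σ x ∈ Finset.univ.erase x := by
      intro σ hσ
      simp only [Finset.mem_filter, Finset.mem_univ, true_and] at hσ
      exact Finset.mem_erase.2 ⟨hσ.1, Finset.mem_univ _⟩
    rw [← Finset.sum_fiberwise_of_maps_to hmaps (fun σ => (fixc σ)^r)]
    have hfib : ∀ b ∈ Finset.univ.erase x,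
        ∑ σ ∈ (Finset.univ.filter (fun σ : Perm α => σ x ≠ x ∧ σ (σ x) = x)).filter
            (fun σ => σ x = b), (fixc σ)^r
        = (Fintype.card α - 2)! * ∑ i ∈ Finset.range (r+1), stirling r i := by
      intro b hb
      have hbx : b ≠ x := (Finset.mem_erase.1 hb).1
      have hset : (Finset.univ.filter (fun σ : Perm α => σ x ≠ x ∧ σ (σ x) = x)).filter
            (fun σ => σ x = b)
          = Finset.univ.filter (fun σ : Perm α => σ x = b ∧ σ b = x) := by
        rw [Finset.filter_filter]
        ext σ
        simp only [Finset.mem_filter, Finset.mem_univ, true_and]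
        constructor
        · rintro ⟨⟨h1, h2⟩, h3⟩
          rw [h3] at h2
          exact ⟨h3, h2⟩
        · rintro ⟨h1, h2⟩
          refine ⟨⟨?_, ?_⟩, h1⟩
          · rw [h1]; exact hbx
          · rw [h1, h2]
      rw [hset, sum_filter_pair r (show x ≠ b from fun e => hbx e.symm) hr]
    rw [Finset.sum_congr rfl hfib, Finset.sum_const, smul_eq_mul,
      Finset.card_erase_of_mem (Finset.mem_univ x), Finset.card_univ]
  rw [Finset.sum_congr rfl (fun x _ => step2 x), Finset.sum_const, smul_eq_mul,
    Finset.card_univ]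
  obtain ⟨m, hm⟩ : ∃ m, Fintype.card α = m + 2 := ⟨Fintype.card α - 2, by omega⟩
  rw [hm]
  have h1 : m + 2 - 1 = m + 1 := by omega
  have h2 : m + 2 - 2 = m := by omega
  rw [h1, h2, Nat.factorial_succ, Nat.factorial_succ]
  ring

end FixcSection

open Nat Equiv Equiv.Perm Finset

lemma fixCount_eq {n : ℕ} (σ : Equiv.Perm (Fin n)) : fixCount σ = fixc σ := rfl

theorem multiplicity_S_n_minus_2_2_in_tensor_power (n r : ℕ) (hn : 4 ≤ n)
    (hr1 : 2 ≤ r) (hrn : r ≤ n - 2) :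
    ∑ σ : Equiv.Perm (Fin n),
        (fixCount σ : ℤ) ^ r *
          ((Nat.choose (fixCount σ) 2 : ℤ) + (twoCycleCount σ : ℤ) - (fixCount σ : ℤ)) =
      (Nat.factorial n : ℤ) *
        ∑ i ∈ Finset.Icc 2 r, (Nat.choose i 2 : ℤ) * (stirling r i : ℤ) := by
  classical
  have hc : Fintype.card (Fin n) = n := Fintype.card_fin n
  have HN1 : ∑ σ : Equiv.Perm (Fin n), (fixc σ) ^ (r+2)
      = n ! * ∑ i ∈ Finset.range (r+3), stirling (r+2) i := by
    have h := sum_pow_fixc (α := Fin n) (r+2) (by rw [hc]; omega)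
    rwa [hc] at h
  have HN2 : ∑ σ : Equiv.Perm (Fin n), (fixc σ) ^ (r+1)
      = n ! * ∑ i ∈ Finset.range (r+2), stirling (r+1) i := by
    have h := sum_pow_fixc (α := Fin n) (r+1) (by rw [hc]; omega)
    rwa [hc] at h
  have HN3 : ∑ σ : Equiv.Perm (Fin n), (fixc σ)^r * (2 * twoCycleCount σ)
      = n ! * ∑ i ∈ Finset.range (r+1), stirling r i := by
    have hD := sum_pow_mul_D (α := Fin n) r (by rw [hc]; omega)
    rw [hc] at hD
    rw [← hD]
    refine Finset.sum_congr rfl fun σ _ => ?_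
    rw [card_D_eq σ]
    rfl
  have key := key_identity r
  simp only [fixCount_eq]
  apply mul_left_cancel₀ (a := (2:ℤ)) two_ne_zero
  have hterm : ∀ σ : Equiv.Perm (Fin n),
      2 * ((fixc σ : ℤ)^r * ((Nat.choose (fixc σ) 2 : ℤ) + (twoCycleCount σ : ℤ) - (fixc σ : ℤ)))
      = ((fixc σ : ℤ)^(r+2) - 3*(fixc σ : ℤ)^(r+1))
        + (fixc σ : ℤ)^r * (2*(twoCycleCount σ : ℤ)) := by
    intro σ
    have hz : ((fixc σ : ℤ)) * (fixc σ : ℤ)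
        = 2 * (Nat.choose (fixc σ) 2 : ℤ) + (fixc σ : ℤ) := by
      exact_mod_cast sq_choose (fixc σ)
    linear_combination (-(fixc σ : ℤ)^r) * hz
  rw [Finset.mul_sum, Finset.sum_congr rfl (fun σ _ => hterm σ), Finset.sum_add_distrib,
    Finset.sum_sub_distrib]
  have Z1 : ∑ σ : Equiv.Perm (Fin n), (fixc σ : ℤ)^(r+2)
      = ((n ! * ∑ i ∈ Finset.range (r+3), stirling (r+2) i : ℕ) : ℤ) := by
    exact_mod_cast HN1
  have Z2 : ∑ σ : Equiv.Perm (Fin n), 3 * (fixc σ : ℤ)^(r+1)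
      = 3 * ((n ! * ∑ i ∈ Finset.range (r+2), stirling (r+1) i : ℕ) : ℤ) := by
    rw [← Finset.mul_sum]
    congr 1
    exact_mod_cast HN2
  have Z3 : ∑ σ : Equiv.Perm (Fin n), (fixc σ : ℤ)^r * (2*(twoCycleCount σ : ℤ))
      = ((n ! * ∑ i ∈ Finset.range (r+1), stirling r i : ℕ) : ℤ) := by
    exact_mod_cast HN3
  have h3 : ∑ σ : Equiv.Perm (Fin n), 3 * (fixc σ : ℤ)^(r+1)
      = ∑ σ : Equiv.Perm (Fin n), (3:ℤ) * (fixc σ : ℤ)^(r+1) := rfl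
  rw [show (∑ σ : Equiv.Perm (Fin n), 3 * (fixc σ : ℤ)^(r+1)) = ∑ σ : Equiv.Perm (Fin n), 3 * (fixc σ : ℤ)^(r+1) from rfl]
  rw [Z1, Z2, Z3]
  have keyZ : ((∑ i ∈ Finset.range (r+3), stirling (r+2) i : ℕ) : ℤ)
      + ((∑ i ∈ Finset.range (r+1), stirling r i : ℕ) : ℤ)
      = 3 * ((∑ i ∈ Finset.range (r+2), stirling (r+1) i : ℕ) : ℤ)
        + 2 * ((∑ i ∈ Finset.Icc 2 r, Nat.choose i 2 * stirling r i : ℕ) : ℤ) := by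
    exact_mod_cast key
  have hT : ((∑ i ∈ Finset.Icc 2 r, Nat.choose i 2 * stirling r i : ℕ) : ℤ)
      = ∑ i ∈ Finset.Icc 2 r, (Nat.choose i 2 : ℤ) * (stirling r i : ℤ) := by
    push_cast
    rfl
  rw [← hT] at *
  push_cast
  push_cast at keyZ
  linear_combination ((n ! : ℤ)) * keyZ
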